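/- Let φ be a formula generated by the grammar φ ::= tt | ⟨a⟩φ | φ∧φ | φ∨φ, and let ⋁_{i=1}^k φ_i be the DNF of φ. Then φ is prime in L_S if and only if for every pair of indices 1 ≤ i, j ≤ k there is some 1 ≤ m ≤ k such that φ_i entails φ_m and φ_j entails φ_m. -/
import Mathlib


/-- Finite, loop-free CCS processes over the action set `Act`:
`p ::= 0 | a.p | p + p`. -/
inductive Proc (Act : Type) : Type
  | nil : Proc Act
  | pre : Act → Proc Act → Proc Act
  | plus : Proc Act → Proc Act → Proc Act

/-- The transition relation: `a.p —a→ p`, and `p₁ + p₂ —a→ p'` iff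
`p₁ —a→ p'` or `p₂ —a→ p'`. -/
inductive Step {Act : Type} : Proc Act → Act → Proc Act → Prop
  | pre (a : Act) (p : Proc Act) : Step (Proc.pre a p) a p
  | plusL : ∀ {p₁ p₂ p' : Proc Act} {a : Act},
      Step p₁ a p' → Step (Proc.plus p₁ p₂) a p'
  | plusR : ∀ {p₁ p₂ p' : Proc Act} {a : Act},
      Step p₂ a p' → Step (Proc.plus p₁ p₂) a p'

/-- HML formulas in negation normal form:
`φ ::= tt | ff | φ∧φ | φ∨φ | ⟨a⟩φ | [a]φ`. -/
inductive HML (Act : Type) : Type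
  | tt : HML Act
  | ff : HML Act
  | conj : HML Act → HML Act → HML Act
  | disj : HML Act → HML Act → HML Act
  | dia : Act → HML Act → HML Act
  | box : Act → HML Act → HML Act

/-- The satisfaction relation `p ⊨ φ`. -/
def Sat {Act : Type} : Proc Act → HML Act → Prop
  | _, HML.tt => True
  | _, HML.ff => False
  | p, HML.conj φ ψ => Sat p φ ∧ Sat p ψ
  | p, HML.disj φ ψ => Sat p φ ∨ Sat p ψ
  | p, HML.dia a φ => ∃ p', Step p a p' ∧ Sat p' φ
  | p, HML.box a φ => ∀ p', Step p a p' → Sat p' φ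

/-- `φ` entails `ψ` iff every process satisfying `φ` satisfies `ψ`. -/
def Entails {Act : Type} (φ ψ : HML Act) : Prop :=
  ∀ p : Proc Act, Sat p φ → Sat p ψ

/-- `R` is a simulation relation. -/
def IsSimulation {Act : Type} (R : Proc Act → Proc Act → Prop) : Prop :=
  ∀ p q, R p q → ∀ a p', Step p a p' → ∃ q', Step q a q' ∧ R p' q'

/-- The simulation preorder `≲_S`: the largest simulation. -/
def Sim {Act : Type} (p q : Proc Act) : Prop :=
  ∃ R, IsSimulation R ∧ R p q

/-- The set `I(p)` of initial actions of a process. -/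
def initials {Act : Type} (p : Proc Act) : Set Act :=
  {a | ∃ p', Step p a p'}

/-- The fragment `L_S`: `φ ::= tt | ff | φ∧φ | φ∨φ | ⟨a⟩φ`. -/
inductive InLS {Act : Type} : HML Act → Prop
  | tt : InLS HML.tt
  | ff : InLS HML.ff
  | conj : ∀ {φ ψ : HML Act}, InLS φ → InLS ψ → InLS (HML.conj φ ψ)
  | disj : ∀ {φ ψ : HML Act}, InLS φ → InLS ψ → InLS (HML.disj φ ψ)
  | dia : ∀ {a : Act} {φ : HML Act}, InLS φ → InLS (HML.dia a φ)

/-- Formulas generated by the grammar `φ ::= tt | ⟨a⟩φ | φ∧φ | φ∨φ`. -/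
inductive InPos {Act : Type} : HML Act → Prop
  | tt : InPos HML.tt
  | dia : ∀ {a : Act} {φ : HML Act}, InPos φ → InPos (HML.dia a φ)
  | conj : ∀ {φ ψ : HML Act}, InPos φ → InPos ψ → InPos (HML.conj φ ψ)
  | disj : ∀ {φ ψ : HML Act}, InPos φ → InPos ψ → InPos (HML.disj φ ψ)

/-- The list of disjunction-free disjuncts of the disjunctive normal form,
obtained by rewriting `⟨a⟩(ψ₁∨ψ₂)` to `⟨a⟩ψ₁ ∨ ⟨a⟩ψ₂` and distributing
conjunctions over disjunctions. -/
def dnfList {Act : Type} : HML Act → List (HML Act)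
  | HML.tt => [HML.tt]
  | HML.ff => [HML.ff]
  | HML.conj φ ψ =>
      (dnfList φ).foldr (fun f acc => ((dnfList ψ).map (fun g => HML.conj f g)) ++ acc) []
  | HML.disj φ ψ => dnfList φ ++ dnfList ψ
  | HML.dia a φ => (dnfList φ).map (fun f => HML.dia a f)
  | HML.box a φ => [HML.box a φ]

/-- `φ` is prime in the fragment `L`: whenever `φ` entails a disjunction of
`L`-formulas, it entails one of the disjuncts. -/
def PrimeIn {Act : Type} (L : HML Act → Prop) (φ : HML Act) : Prop :=
  ∀ φ₁ φ₂ : HML Act, L φ₁ → L φ₂ → Entails φ (HML.disj φ₁ φ₂) →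
    Entails φ φ₁ ∨ Entails φ φ₂

/-! ### Auxiliary development -/

/-- Disjunction-free positive formulas: `tt | ⟨a⟩φ | φ∧φ`. -/
inductive PosDF {Act : Type} : HML Act → Prop
  | tt : PosDF HML.tt
  | dia : ∀ {a : Act} {φ : HML Act}, PosDF φ → PosDF (HML.dia a φ)
  | conj : ∀ {φ ψ : HML Act}, PosDF φ → PosDF ψ → PosDF (HML.conj φ ψ)

lemma PosDF.inLS {Act : Type} {φ : HML Act} (h : PosDF φ) : InLS φ := by
  induction h with
  | tt => exact InLS.tt
  | dia _ ih => exact InLS.dia ih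
  | conj _ _ ih1 ih2 => exact InLS.conj ih1 ih2

/-- Characteristic process of a (disjunction-free positive) formula. -/
def charP {Act : Type} : HML Act → Proc Act
  | HML.tt => Proc.nil
  | HML.ff => Proc.nil
  | HML.conj φ ψ => Proc.plus (charP φ) (charP ψ)
  | HML.disj _ _ => Proc.nil
  | HML.dia a φ => Proc.pre a (charP φ)
  | HML.box _ _ => Proc.nil

lemma sim_step {Act : Type} {p q : Proc Act} (h : Sim p q) {a : Act} {p' : Proc Act}
    (hs : Step p a p') : ∃ q', Step q a q' ∧ Sim p' q' := by
  obtain ⟨R, hR, hpq⟩ := h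
  obtain ⟨q', h1, h2⟩ := hR p q hpq a p' hs
  exact ⟨q', h1, R, hR, h2⟩

lemma sim_refl {Act : Type} (p : Proc Act) : Sim p p :=
  ⟨Eq, by rintro x y rfl a x' hs; exact ⟨x', hs, rfl⟩, rfl⟩

lemma sim_nil {Act : Type} (q : Proc Act) : Sim Proc.nil q := by
  refine ⟨fun p _ => p = Proc.nil, ?_, rfl⟩
  rintro p _ rfl a p' hs
  cases hs

lemma sim_pre {Act : Type} {p q q' : Proc Act} {a : Act} (hs : Step q a q') (h : Sim p q') :
    Sim (Proc.pre a p) q := by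
  refine ⟨fun x y => (x = Proc.pre a p ∧ y = q) ∨ Sim x y, ?_, Or.inl ⟨rfl, rfl⟩⟩
  rintro x y (⟨rfl, rfl⟩ | hxy) b x' hstep
  · cases hstep; exact ⟨q', hs, Or.inr h⟩
  · obtain ⟨y', h1, h2⟩ := sim_step hxy hstep
    exact ⟨y', h1, Or.inr h2⟩

lemma sim_plus {Act : Type} {p1 p2 q : Proc Act} (h1 : Sim p1 q) (h2 : Sim p2 q) :
    Sim (Proc.plus p1 p2) q := by
  refine ⟨fun x y => (∃ u v, x = Proc.plus u v ∧ Sim u y ∧ Sim v y) ∨ Sim x y, ?_,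
    Or.inl ⟨p1, p2, rfl, h1, h2⟩⟩
  rintro x y (⟨u, v, rfl, hu, hv⟩ | hxy) c x' hstep
  · cases hstep with
    | plusL hs => obtain ⟨y', hy1, hy2⟩ := sim_step hu hs; exact ⟨y', hy1, Or.inr hy2⟩
    | plusR hs => obtain ⟨y', hy1, hy2⟩ := sim_step hv hs; exact ⟨y', hy1, Or.inr hy2⟩
  · obtain ⟨y', hy1, hy2⟩ := sim_step hxy hstep
    exact ⟨y', hy1, Or.inr hy2⟩

lemma sim_plusL {Act : Type} (p q : Proc Act) : Sim p (Proc.plus p q) := by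
  refine ⟨fun x y => (x = p ∧ y = Proc.plus p q) ∨ Sim x y, ?_, Or.inl ⟨rfl, rfl⟩⟩
  rintro x y (⟨rfl, rfl⟩ | hxy) a x' hstep
  · exact ⟨x', Step.plusL hstep, Or.inr (sim_refl x')⟩
  · obtain ⟨y', hy1, hy2⟩ := sim_step hxy hstep
    exact ⟨y', hy1, Or.inr hy2⟩

lemma sim_plusR {Act : Type} (p q : Proc Act) : Sim q (Proc.plus p q) := by
  refine ⟨fun x y => (x = q ∧ y = Proc.plus p q) ∨ Sim x y, ?_, Or.inl ⟨rfl, rfl⟩⟩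
  rintro x y (⟨rfl, rfl⟩ | hxy) a x' hstep
  · exact ⟨x', Step.plusR hstep, Or.inr (sim_refl x')⟩
  · obtain ⟨y', hy1, hy2⟩ := sim_step hxy hstep
    exact ⟨y', hy1, Or.inr hy2⟩

/-- `L_S`-formulas are preserved by the simulation preorder. -/
lemma sat_mono {Act : Type} {χ : HML Act} (hχ : InLS χ) :
    ∀ {p q : Proc Act}, Sim p q → Sat p χ → Sat q χ := by
  induction hχ with
  | tt => intro p q _ _; trivial
  | ff => intro p q _ hf; exact hf.elim
  | conj _ _ ih1 ih2 => intro p q hs hsat; exact ⟨ih1 hs hsat.1, ih2 hs hsat.2⟩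
  | disj _ _ ih1 ih2 =>
      intro p q hs hsat
      exact hsat.elim (fun hh => Or.inl (ih1 hs hh)) (fun hh => Or.inr (ih2 hs hh))
  | dia _ ih =>
      intro p q hs hsat
      obtain ⟨p', hst, hp'⟩ := hsat
      obtain ⟨q', h1, h2⟩ := sim_step hs hst
      exact ⟨q', h1, ih h2 hp'⟩

lemma sat_charP {Act : Type} {ψ : HML Act} (h : PosDF ψ) : Sat (charP ψ) ψ := by
  induction h with
  | tt => trivial
  | dia _ ih => exact ⟨_, Step.pre _ _, ih⟩
  | conj h1 h2 ih1 ih2 =>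
      exact ⟨sat_mono h1.inLS (sim_plusL _ _) ih1, sat_mono h2.inLS (sim_plusR _ _) ih2⟩

lemma sim_charP {Act : Type} {ψ : HML Act} (h : PosDF ψ) :
    ∀ {q : Proc Act}, Sat q ψ → Sim (charP ψ) q := by
  induction h with
  | tt => intro q _; exact sim_nil q
  | dia _ ih =>
      intro q hq
      obtain ⟨q', hs, hq'⟩ := hq
      exact sim_pre hs (ih hq')
  | conj _ _ ih1 ih2 => intro q hq; exact sim_plus (ih1 hq.1) (ih2 hq.2)

/-- Every disjunction-free positive formula is prime in `L_S`. -/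
lemma posDF_prime {Act : Type} {ψ : HML Act} (h : PosDF ψ) : PrimeIn InLS ψ := by
  intro χ1 χ2 h1 h2 hent
  have hc : Sat (charP ψ) χ1 ∨ Sat (charP ψ) χ2 := hent (charP ψ) (sat_charP h)
  rcases hc with hc | hc
  · exact Or.inl (fun p hp => sat_mono h1 (sim_charP h hp) hc)
  · exact Or.inr (fun p hp => sat_mono h2 (sim_charP h hp) hc)

lemma mem_conjFold {Act : Type} {l g : List (HML Act)} {x : HML Act} :
    x ∈ l.foldr (fun f acc => (g.map (fun g' => HML.conj f g')) ++ acc) [] ↔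
      ∃ f ∈ l, ∃ y ∈ g, x = HML.conj f y := by
  induction l with
  | nil => simp
  | cons a l ih =>
      simp only [List.foldr_cons, List.mem_append, List.mem_map, ih, List.mem_cons]
      constructor
      · rintro (⟨y, hy, rfl⟩ | ⟨f, hf, y, hy, rfl⟩)
        · exact ⟨a, Or.inl rfl, y, hy, rfl⟩
        · exact ⟨f, Or.inr hf, y, hy, rfl⟩
      · rintro ⟨f, (rfl | hf), y, hy, rfl⟩
        · exact Or.inl ⟨y, hy, rfl⟩
        · exact Or.inr ⟨f, hf, y, hy, rfl⟩

/-- `φ` is equivalent to the disjunction of its DNF disjuncts. -/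
lemma sat_dnf {Act : Type} (φ : HML Act) (p : Proc Act) :
    Sat p φ ↔ ∃ ψ ∈ dnfList φ, Sat p ψ := by
  induction φ generalizing p with
  | tt => simp [dnfList, Sat]
  | ff => simp [dnfList, Sat]
  | conj φ ψ ihφ ihψ =>
      constructor
      · rintro ⟨h1, h2⟩
        obtain ⟨f, hf, hpf⟩ := (ihφ p).mp h1
        obtain ⟨g, hg, hpg⟩ := (ihψ p).mp h2
        exact ⟨HML.conj f g, mem_conjFold.mpr ⟨f, hf, g, hg, rfl⟩, hpf, hpg⟩
      · rintro ⟨x, hx, hsx⟩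
        obtain ⟨f, hf, g, hg, rfl⟩ := mem_conjFold.mp hx
        exact ⟨(ihφ p).mpr ⟨f, hf, hsx.1⟩, (ihψ p).mpr ⟨g, hg, hsx.2⟩⟩
  | disj φ ψ ihφ ihψ =>
      constructor
      · rintro (h1 | h1)
        · obtain ⟨f, hf, hpf⟩ := (ihφ p).mp h1
          exact ⟨f, by simp [dnfList, hf], hpf⟩
        · obtain ⟨f, hf, hpf⟩ := (ihψ p).mp h1
          exact ⟨f, by simp [dnfList, hf], hpf⟩
      · rintro ⟨x, hx, hsx⟩
        rcases (List.mem_append.mp hx) with hx | hx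
        · exact Or.inl ((ihφ p).mpr ⟨x, hx, hsx⟩)
        · exact Or.inr ((ihψ p).mpr ⟨x, hx, hsx⟩)
  | dia a φ ihφ =>
      constructor
      · rintro ⟨p', hs, hp'⟩
        obtain ⟨f, hf, hpf⟩ := (ihφ p').mp hp'
        exact ⟨HML.dia a f, List.mem_map.mpr ⟨f, hf, rfl⟩, p', hs, hpf⟩
      · rintro ⟨x, hx, hsx⟩
        obtain ⟨f, hf, rfl⟩ := List.mem_map.mp hx
        obtain ⟨p', hs, hpf⟩ := hsx
        exact ⟨p', hs, (ihφ p').mpr ⟨f, hf, hpf⟩⟩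
  | box a φ _ => simp [dnfList]

/-- DNF disjuncts of a positive formula are disjunction-free positive. -/
lemma dnf_posDF {Act : Type} {φ : HML Act} (h : InPos φ) :
    ∀ ψ ∈ dnfList φ, PosDF ψ := by
  induction h with
  | tt =>
      intro ψ hψ
      simp [dnfList] at hψ
      subst hψ; exact PosDF.tt
  | dia _ ih =>
      intro ψ hψ
      simp only [dnfList, List.mem_map] at hψ
      obtain ⟨f, hf, rfl⟩ := hψ
      exact PosDF.dia (ih f hf)
  | conj _ _ ih1 ih2 =>
      intro ψ hψ
      obtain ⟨f, hf, g, hg, rfl⟩ := mem_conjFold.mp hψ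
      exact PosDF.conj (ih1 f hf) (ih2 g hg)
  | disj _ _ ih1 ih2 =>
      intro ψ hψ
      rcases List.mem_append.mp hψ with hψ | hψ
      · exact ih1 ψ hψ
      · exact ih2 ψ hψ

lemma dnf_exists_mem {Act : Type} {φ : HML Act} (h : InPos φ) :
    ∃ ψ, ψ ∈ dnfList φ := by
  induction h with
  | tt => exact ⟨HML.tt, by simp [dnfList]⟩
  | dia _ ih =>
      obtain ⟨ψ, hψ⟩ := ih
      exact ⟨_, List.mem_map.mpr ⟨ψ, hψ, rfl⟩⟩
  | conj _ _ ih1 ih2 =>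
      obtain ⟨f, hf⟩ := ih1
      obtain ⟨g, hg⟩ := ih2
      exact ⟨HML.conj f g, mem_conjFold.mpr ⟨f, hf, g, hg, rfl⟩⟩
  | disj _ _ ih1 _ =>
      obtain ⟨f, hf⟩ := ih1
      exact ⟨f, List.mem_append.mpr (Or.inl hf)⟩

/-- Every positive formula is satisfiable. -/
lemma inPos_sat {Act : Type} {φ : HML Act} (h : InPos φ) : ∃ p, Sat p φ := by
  obtain ⟨ψ, hψ⟩ := dnf_exists_mem h
  exact ⟨charP ψ, (sat_dnf φ _).mpr ⟨ψ, hψ, sat_charP (dnf_posDF h ψ hψ)⟩⟩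

/-- Big disjunction of a list of formulas. -/
def disjList {Act : Type} : List (HML Act) → HML Act
  | [] => HML.ff
  | ψ :: l => HML.disj ψ (disjList l)

lemma sat_disjList {Act : Type} {l : List (HML Act)} {p : Proc Act} :
    Sat p (disjList l) ↔ ∃ ψ ∈ l, Sat p ψ := by
  induction l with
  | nil => simp [disjList, Sat]
  | cons a l ih => simp [disjList, Sat, ih]

lemma inLS_disjList {Act : Type} {l : List (HML Act)} (h : ∀ ψ ∈ l, InLS ψ) :
    InLS (disjList l) := by
  induction l with
  | nil => exact InLS.ff
  | cons a l ih =>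
      exact InLS.disj (h a (by simp)) (ih fun x hx => h x (by simp [hx]))

lemma prime_entails_mem {Act : Type} {φ : HML Act} (hp : PrimeIn InLS φ) :
    ∀ l : List (HML Act), (∀ ψ ∈ l, InLS ψ) → Entails φ (disjList l) →
      Entails φ HML.ff ∨ ∃ ψ ∈ l, Entails φ ψ := by
  intro l
  induction l with
  | nil => intro _ hent; exact Or.inl hent
  | cons ψ l ih =>
      intro hL hent
      rcases hp ψ (disjList l) (hL ψ (by simp))
          (inLS_disjList fun x hx => hL x (by simp [hx])) hent with hh | hh
      · exact Or.inr ⟨ψ, by simp, hh⟩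
      · rcases ih (fun x hx => hL x (by simp [hx])) hh with hh' | ⟨x, hx, hex⟩
        · exact Or.inl hh'
        · exact Or.inr ⟨x, by simp [hx], hex⟩

/-- Let `φ` be generated by `φ ::= tt | ⟨a⟩φ | φ∧φ | φ∨φ` with DNF
`⋁_{i=1}^k φ_i`. Then `φ` is prime in `L_S` iff for every pair `i, j` there is
some `m` such that `φ_i` entails `φ_m` and `φ_j` entails `φ_m`. -/
theorem prime_iff_pairs_common_disjunct {Act : Type} [Fintype Act] [Nonempty Act]
    (φ : HML Act) (h : InPos φ) :
    PrimeIn InLS φ ↔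
      ∀ ψ₁ ∈ dnfList φ, ∀ ψ₂ ∈ dnfList φ,
        ∃ ψₘ ∈ dnfList φ, Entails ψ₁ ψₘ ∧ Entails ψ₂ ψₘ := by
  constructor
  · intro hp ψ1 h1 ψ2 h2
    have hent : Entails φ (disjList (dnfList φ)) :=
      fun p hs => sat_disjList.mpr ((sat_dnf φ p).mp hs)
    have hLS : ∀ ψ ∈ dnfList φ, InLS ψ := fun ψ hψ => (dnf_posDF h ψ hψ).inLS
    rcases prime_entails_mem hp _ hLS hent with hff | ⟨ψm, hm, hentm⟩
    · obtain ⟨p, hsat⟩ := inPos_sat h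
      exact absurd (hff p hsat) (fun hf => hf)
    · refine ⟨ψm, hm, ?_, ?_⟩
      · exact fun p hs => hentm p ((sat_dnf φ p).mpr ⟨ψ1, h1, hs⟩)
      · exact fun p hs => hentm p ((sat_dnf φ p).mpr ⟨ψ2, h2, hs⟩)
  · intro hpair χ1 χ2 hL1 hL2 hent
    by_contra hcon
    push_neg at hcon
    obtain ⟨hn1, hn2⟩ := hcon
    simp only [Entails, not_forall, Classical.not_imp] at hn1 hn2
    obtain ⟨p1, hsφ1, hns1⟩ := hn1
    obtain ⟨p2, hsφ2, hns2⟩ := hn2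
    obtain ⟨ψ1, hm1, hsψ1⟩ := (sat_dnf φ p1).mp hsφ1
    obtain ⟨ψ2, hm2, hsψ2⟩ := (sat_dnf φ p2).mp hsφ2
    have hentψ : ∀ ψ ∈ dnfList φ, Entails ψ (HML.disj χ1 χ2) :=
      fun ψ hψ p hs => hent p ((sat_dnf φ p).mpr ⟨ψ, hψ, hs⟩)
    have hnot1 : ¬ Entails ψ1 χ1 := fun he => hns1 (he p1 hsψ1)
    have hnot2 : ¬ Entails ψ2 χ2 := fun he => hns2 (he p2 hsψ2)
    obtain ⟨ψm, hmm, he1, he2⟩ := hpair ψ1 hm1 ψ2 hm2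
    rcases posDF_prime (dnf_posDF h ψm hmm) χ1 χ2 hL1 hL2 (hentψ ψm hmm) with hc | hc
    · exact hnot1 (fun p hs => hc p (he1 p hs))
    · exact hnot2 (fun p hs => hc p (he2 p hs))
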